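/- Consider the disturbance-free closed loop under the baseline algorithm: let {B(k)}_{k∈ℕ} be an i.i.d. sequence of Bernoulli random variables with P(B(k)=1)=p₀ ∈ [0,1), independent of the initial state x(0), and define x(k+1) = f(x(k),0,0) if B(k)=1 and x(k+1) = f(x(k),κ(x(k)),0) if B(k)=0. If p₀·α + (1−p₀)·ρ < 1, then the closed loop is stochastically stable; in particular ∑_{k=0}^∞ E[φ₁(|x(k)|)] < ∞. -/

import Mathlib

open MeasureTheory ProbabilityTheory Filter

/-- Stochastic stability of the baseline algorithm with i.i.d. availability
(Theorem 1). The disturbance-free closed loop `x(k+1) = f(x(k),0,0)` if `B(k)=1` (processor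
unavailable, probability `p₀`) and `x(k+1) = f(x(k),κ(x(k)),0)` otherwise, with `{B(k)}`
i.i.d. Bernoulli independent of `x(0)`, is stochastically stable whenever
`p₀α + (1−p₀)ρ < 1`; in particular `∑_{k=0}^∞ E[φ₁(|x(k)|)] < ∞`. -/
theorem stmt_0
    {n p m : ℕ}
    (f : EuclideanSpace ℝ (Fin n) → EuclideanSpace ℝ (Fin p) → EuclideanSpace ℝ (Fin m) →
      EuclideanSpace ℝ (Fin n))
    (hfmeas : Measurable fun q : EuclideanSpace ℝ (Fin n) × EuclideanSpace ℝ (Fin p) ×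
      EuclideanSpace ℝ (Fin m) => f q.1 q.2.1 q.2.2)
    (hf0 : f 0 0 0 = 0)
    (V : EuclideanSpace ℝ (Fin n) → ℝ) (hVmeas : Measurable V) (hVnonneg : ∀ x, 0 ≤ V x)
    (κ : EuclideanSpace ℝ (Fin n) → EuclideanSpace ℝ (Fin p)) (hκmeas : Measurable κ)
    -- Assumption 1: class-K∞ bounds and closed-loop contraction
    (φ₁ φ₂ : ℝ → ℝ)
    (hφ₁K : Continuous φ₁ ∧ φ₁ 0 = 0 ∧ StrictMonoOn φ₁ (Set.Ici 0) ∧ Tendsto φ₁ atTop atTop)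
    (hφ₂K : Continuous φ₂ ∧ φ₂ 0 = 0 ∧ StrictMonoOn φ₂ (Set.Ici 0) ∧ Tendsto φ₂ atTop atTop)
    (ρ : ℝ) (hρ0 : 0 ≤ ρ) (hρ1 : ρ < 1)
    (hsandwich : ∀ x, φ₁ ‖x‖ ≤ V x ∧ V x ≤ φ₂ ‖x‖)
    (hcontract : ∀ x, V (f x (κ x) 0) ≤ ρ * V x)
    -- Assumption 3: open-loop growth bound with α ∈ [1, 1/p₀)
    (p₀ : ℝ) (hp₀0 : 0 ≤ p₀) (hp₀1 : p₀ < 1)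
    (α : ℝ) (hα1 : 1 ≤ α) (hαp : p₀ * α < 1)
    (hgrow : ∀ x, V (f x 0 0) ≤ α * V x)
    -- probability space, i.i.d. Bernoulli availability, initial state
    {Ω : Type*} [MeasurableSpace Ω] (μ : Measure Ω) [IsProbabilityMeasure μ]
    (B : ℕ → Ω → Bool) (hBmeas : ∀ k, Measurable (B k))
    (hBdist : ∀ k, μ {ω | B k ω = true} = ENNReal.ofReal p₀)
    (hBiid : iIndepFun B μ)
    (x0 : Ω → EuclideanSpace ℝ (Fin n)) (hx0meas : Measurable x0)
    (hBx0indep : IndepFun x0 (fun ω k => B k ω) μ)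
    (hx0int : ∫⁻ ω, ENNReal.ofReal (φ₂ ‖x0 ω‖) ∂μ < ⊤)
    -- the closed-loop trajectory
    (x : ℕ → Ω → EuclideanSpace ℝ (Fin n))
    (hxinit : ∀ ω, x 0 ω = x0 ω)
    (hxrec : ∀ k ω, x (k + 1) ω =
      if B k ω = true then f (x k ω) 0 0 else f (x k ω) (κ (x k ω)) 0)
    -- stability condition
    (hstab : p₀ * α + (1 - p₀) * ρ < 1) :
    ∑' k : ℕ, ∫⁻ ω, ENNReal.ofReal (φ₁ ‖x k ω‖) ∂μ < ⊤ := by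
  classical
  -- constants
  set a : ENNReal := ENNReal.ofReal α with ha
  set b : ENNReal := ENNReal.ofReal ρ with hb
  set lam : ENNReal := ENNReal.ofReal (p₀ * α + (1 - p₀) * ρ) with hlam
  have hlam1 : lam < 1 := by
    rw [hlam]; exact ENNReal.ofReal_lt_one.2 hstab
  -- per-step multiplier
  set D : ℕ → Ω → ENNReal := fun i ω => if B i ω = true then a else b with hD
  set W : ℕ → Ω → ENNReal := fun k ω => ENNReal.ofReal (V (x k ω)) with hW
  -- measurability of the trajectory
  have hx : ∀ k, Measurable (x k) := by
    intro k
    induction k with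
    | zero =>
      have : x 0 = x0 := funext hxinit
      rw [this]; exact hx0meas
    | succ k ih =>
      have hxe : x (k + 1) = fun ω =>
          if B k ω = true then f (x k ω) 0 0 else f (x k ω) (κ (x k ω)) 0 :=
        funext (hxrec k)
      rw [hxe]
      have hS : MeasurableSet {ω | B k ω = true} := (hBmeas k) (measurableSet_singleton true)
      have h1 : Measurable fun ω => f (x k ω) 0 0 := by
        have he : (fun ω => f (x k ω) 0 0) =
            (fun q : EuclideanSpace ℝ (Fin n) × EuclideanSpace ℝ (Fin p) ×
              EuclideanSpace ℝ (Fin m) => f q.1 q.2.1 q.2.2) ∘ (fun ω => (x k ω, 0, 0)) := rfl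
        rw [he]
        exact hfmeas.comp (ih.prodMk measurable_const)
      have h2 : Measurable fun ω => f (x k ω) (κ (x k ω)) 0 := by
        have he : (fun ω => f (x k ω) (κ (x k ω)) 0) =
            (fun q : EuclideanSpace ℝ (Fin n) × EuclideanSpace ℝ (Fin p) ×
              EuclideanSpace ℝ (Fin m) => f q.1 q.2.1 q.2.2) ∘
              (fun ω => (x k ω, κ (x k ω), 0)) := rfl
        rw [he]
        exact hfmeas.comp (ih.prodMk ((hκmeas.comp ih).prodMk measurable_const))
      exact Measurable.ite hS h1 h2
  have hWmeas : ∀ k, Measurable (W k) := fun k =>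
    ENNReal.measurable_ofReal.comp (hVmeas.comp (hx k))
  have hDmeas : ∀ i, Measurable (D i) := by
    intro i
    exact Measurable.ite ((hBmeas i) (measurableSet_singleton true)) measurable_const
      measurable_const
  -- pointwise recursion bound
  have hstep : ∀ k ω, W (k + 1) ω ≤ D k ω * W k ω := by
    intro k ω
    simp only [hW, hD, hxrec k ω]
    by_cases hbk : B k ω = true
    · simp only [hbk, if_true]
      calc ENNReal.ofReal (V (f (x k ω) 0 0)) ≤ ENNReal.ofReal (α * V (x k ω)) :=
            ENNReal.ofReal_le_ofReal (hgrow _)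
        _ = a * ENNReal.ofReal (V (x k ω)) := by
            rw [ha, ENNReal.ofReal_mul (by linarith)]
    · simp only [hbk, if_false]
      calc ENNReal.ofReal (V (f (x k ω) (κ (x k ω)) 0)) ≤ ENNReal.ofReal (ρ * V (x k ω)) :=
            ENNReal.ofReal_le_ofReal (hcontract _)
        _ = b * ENNReal.ofReal (V (x k ω)) := by
            rw [hb, ENNReal.ofReal_mul hρ0]
  have hWbound : ∀ k ω, W k ω ≤ (∏ i ∈ Finset.range k, D i ω) * W 0 ω := by
    intro k
    induction k with
    | zero => intro ω; simp
    | succ k ih =>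
      intro ω
      calc W (k + 1) ω ≤ D k ω * W k ω := hstep k ω
        _ ≤ D k ω * ((∏ i ∈ Finset.range k, D i ω) * W 0 ω) :=
            mul_le_mul_right (ih ω) _
        _ = (∏ i ∈ Finset.range (k + 1), D i ω) * W 0 ω := by
            rw [Finset.prod_range_succ]; ring
  -- distribution of D i
  have hDint : ∀ i, ∫⁻ ω, D i ω ∂μ = lam := by
    intro i
    have hS : MeasurableSet {ω | B i ω = true} := (hBmeas i) (measurableSet_singleton true)
    have hsplit : ∀ ω, D i ω =
        Set.indicator {ω | B i ω = true} (fun _ => a) ω +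
        Set.indicator {ω | B i ω = true}ᶜ (fun _ => b) ω := by
      intro ω
      by_cases hbk : B i ω = true
      · simp [hD, Set.indicator_of_mem, hbk, Set.indicator_of_notMem]
      · simp [hD, hbk, Set.indicator_of_notMem, Set.indicator_of_mem]
    calc ∫⁻ ω, D i ω ∂μ
        = ∫⁻ ω, (Set.indicator {ω | B i ω = true} (fun _ => a) ω +
            Set.indicator {ω | B i ω = true}ᶜ (fun _ => b) ω) ∂μ := by
          exact lintegral_congr hsplit
      _ = a * μ {ω | B i ω = true} + b * μ ({ω | B i ω = true}ᶜ) := by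
          rw [lintegral_add_left ((measurable_const).indicator hS),
            lintegral_indicator_const hS, lintegral_indicator_const hS.compl]
      _ = lam := by
          rw [hBdist i, prob_compl_eq_one_sub hS, hBdist i]
          have h1 : (1 : ENNReal) - ENNReal.ofReal p₀ = ENNReal.ofReal (1 - p₀) := by
            rw [ENNReal.ofReal_sub _ hp₀0, ENNReal.ofReal_one]
          rw [h1, ha, hb, hlam, ← ENNReal.ofReal_mul (by linarith),
            ← ENNReal.ofReal_mul (by linarith),
            ← ENNReal.ofReal_add (by nlinarith) (by nlinarith)]
          ring_nf
  -- independence of the D's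
  have hDiid : iIndepFun D μ := by
    have := hBiid.comp (fun i (v : Bool) => if v = true then a else b)
      (fun i => measurable_of_countable _)
    convert this using 1
    rfl
  -- integral of product of D's
  have hprod : ∀ k, ∫⁻ ω, (∏ i ∈ Finset.range k, D i ω) ∂μ = lam ^ k := by
    intro k
    induction k with
    | zero => simp
    | succ k ih =>
      have hindep : IndepFun (∏ j ∈ Finset.range k, D j) (D k) μ :=
        hDiid.indepFun_finset_prod_of_notMem hDmeas (Finset.notMem_range_self)
      have hmp : Measurable (∏ j ∈ Finset.range k, D j) := by
        have he : (∏ j ∈ Finset.range k, D j) = fun ω => ∏ j ∈ Finset.range k, D j ω := by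
          funext ω; simp
        rw [he]
        exact Finset.measurable_prod _ fun i _ => hDmeas i
      calc ∫⁻ ω, (∏ i ∈ Finset.range (k + 1), D i ω) ∂μ
          = ∫⁻ ω, ((∏ j ∈ Finset.range k, D j) * D k) ω ∂μ := by
            apply lintegral_congr; intro ω
            simp [Finset.prod_range_succ]
        _ = (∫⁻ ω, (∏ j ∈ Finset.range k, D j) ω ∂μ) * ∫⁻ ω, D k ω ∂μ :=
            lintegral_mul_eq_lintegral_mul_lintegral_of_indepFun hmp (hDmeas k) hindep
        _ = lam ^ k * lam := by
            rw [hDint k]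
            congr 1
            · calc ∫⁻ ω, (∏ j ∈ Finset.range k, D j) ω ∂μ
                  = ∫⁻ ω, (∏ j ∈ Finset.range k, D j ω) ∂μ := by
                    apply lintegral_congr; intro ω; simp
                _ = lam ^ k := ih
        _ = lam ^ (k + 1) := by ring
  -- independence of the product of D's from W 0
  have hIndepProd : ∀ k, IndepFun (fun ω => ∏ i ∈ Finset.range k, D i ω) (W 0) μ := by
    intro k
    have hg : Measurable fun v : EuclideanSpace ℝ (Fin n) => ENNReal.ofReal (V v) :=
      ENNReal.measurable_ofReal.comp hVmeas
    have hh : Measurable fun bb : ℕ → Bool =>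
        ∏ i ∈ Finset.range k, (if bb i = true then a else b) := by
      apply Finset.measurable_prod
      intro i _
      exact (measurable_of_countable (fun v : Bool => if v = true then a else b)).comp
        (measurable_pi_apply i)
    have := (hBx0indep.comp hg hh).symm
    have he1 : (fun ω => ∏ i ∈ Finset.range k, D i ω) =
        (fun bb : ℕ → Bool => ∏ i ∈ Finset.range k, (if bb i = true then a else b)) ∘
          (fun ω k => B k ω) := by
      funext ω; simp [hD, Function.comp]
    have he2 : W 0 = (fun v => ENNReal.ofReal (V v)) ∘ x0 := by
      funext ω; simp [hW, hxinit, Function.comp]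
    rw [he1, he2]
    exact this
  -- initial bound
  set C : ENNReal := ∫⁻ ω, W 0 ω ∂μ with hC
  have hCfin : C < ⊤ := by
    rw [hC]
    calc ∫⁻ ω, W 0 ω ∂μ ≤ ∫⁻ ω, ENNReal.ofReal (φ₂ ‖x0 ω‖) ∂μ := by
          apply lintegral_mono; intro ω
          simp only [hW, hxinit]
          exact ENNReal.ofReal_le_ofReal (hsandwich (x0 ω)).2
      _ < ⊤ := hx0int
  -- main term bound
  have hterm : ∀ k, ∫⁻ ω, ENNReal.ofReal (φ₁ ‖x k ω‖) ∂μ ≤ lam ^ k * C := by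
    intro k
    have hmp : Measurable fun ω => ∏ j ∈ Finset.range k, D j ω := by
      apply Finset.measurable_prod; intro i _; exact hDmeas i
    calc ∫⁻ ω, ENNReal.ofReal (φ₁ ‖x k ω‖) ∂μ
        ≤ ∫⁻ ω, W k ω ∂μ := by
          apply lintegral_mono; intro ω
          exact ENNReal.ofReal_le_ofReal (hsandwich (x k ω)).1
      _ ≤ ∫⁻ ω, ((fun ω => ∏ i ∈ Finset.range k, D i ω) * W 0) ω ∂μ := by
          apply lintegral_mono; intro ω
          exact hWbound k ω
      _ = (∫⁻ ω, (∏ i ∈ Finset.range k, D i ω) ∂μ) * ∫⁻ ω, W 0 ω ∂μ :=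
          lintegral_mul_eq_lintegral_mul_lintegral_of_indepFun hmp (hWmeas 0) (hIndepProd k)
      _ = lam ^ k * C := by rw [hprod k, hC]
  calc ∑' k : ℕ, ∫⁻ ω, ENNReal.ofReal (φ₁ ‖x k ω‖) ∂μ
      ≤ ∑' k : ℕ, lam ^ k * C := ENNReal.tsum_le_tsum hterm
    _ = (∑' k : ℕ, lam ^ k) * C := by rw [ENNReal.tsum_mul_right]
    _ = (1 - lam)⁻¹ * C := by rw [ENNReal.tsum_geometric]
    _ < ⊤ := ENNReal.mul_lt_top (by simp [ENNReal.inv_lt_top, tsub_pos_iff_lt, hlam1]) hCfin
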